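/- Let ν ⊆ λ be partitions. Then, as an identity of rational functions in q, q^{n(λ)} α_λ(ν; q^{−1}) = ∏_{j≥1} q^{ binom(λ'_j − ν'_j, 2) + binom(ν'_j, 2) } [ λ'_j − ν'_{j+1} choose ν'_j − ν'_{j+1} ]_q, where α_λ(ν; q^{−1}) denotes the result of substituting q ↦ q^{−1} in the polynomial α_λ(ν;q). -/

import Mathlib

namespace KHL

/-- `conjC l j` is the `j`-th part (1-based) of the conjugate of the partition `l`. -/
def conjC (l : List ℕ) (j : ℕ) : ℕ := (l.filter (fun x => j ≤ x)).length

/-- `nstat λ = n(λ) = Σ_{i≥1} (i-1)·λ_i`. -/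
def nstat (l : List ℕ) : ℕ := ∑ i ∈ Finset.range l.length, i * l.getD i 0

/-- The Gaussian binomial coefficient `[n choose k]_q` as a polynomial in `ℤ[q]`. -/
noncomputable def qbinom : ℕ → ℕ → Polynomial ℤ
  | _, 0 => 1
  | 0, _ + 1 => 0
  | n + 1, k + 1 => qbinom n k + Polynomial.X ^ (k + 1) * qbinom n (k + 1)

/-- The finset of all partitions of `n`, as weakly decreasing lists of positive integers. -/
noncomputable def partitionsOf (n : ℕ) : Finset (List ℕ) :=
  Finset.image (fun p : Nat.Partition n => (Multiset.sort p.parts (· ≤ ·)).reverse) Finset.univ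

/-- The conjugate partition, as a list. -/
def conjList (l : List ℕ) : List ℕ := (List.range (l.headD 0)).map fun j => conjC l (j + 1)

/-- A semistandard Young tableau of shape `sh` (a partition, as a list of row lengths);
entries are positive inside the diagram (cell `(i,j)` with `j < sh_i`), `0` outside;
rows weakly increase, columns strictly increase. -/
structure SSYT (sh : List ℕ) where
  entry : ℕ → ℕ → ℕ
  zero_outside : ∀ i j, sh.getD i 0 ≤ j → entry i j = 0
  pos_inside : ∀ i j, j < sh.getD i 0 → 1 ≤ entry i j
  row_weak : ∀ i j, j + 1 < sh.getD i 0 → entry i j ≤ entry i (j + 1)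
  col_strict : ∀ i j, j < sh.getD (i + 1) 0 → entry i j < entry (i + 1) j

/-- The filling `f` of shape `sh` has weight `mu`: the entry `k+1` occurs `mu_{k+1}` times. -/
def WtIs (sh : List ℕ) (f : ℕ → ℕ → ℕ) (mu : List ℕ) : Prop :=
  ∀ k, {p : ℕ × ℕ | p.2 < sh.getD p.1 0 ∧ f p.1 p.2 = k + 1}.ncard = mu.getD k 0

/-- The Kostka number `K_{ημ}`: the number of SSYT of shape `η` and weight `μ`. -/
noncomputable def kostka (eta mu : List ℕ) : ℕ :=
  Nat.card {T : SSYT eta // WtIs eta T.entry mu}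

/- ### The Lascoux–Schützenberger charge -/

/-- charge of a standard word, given the positions of the letters `1, 2, …` in order:
letter 1 has index 0, and the index of `r+1` equals that of `r`, plus one if `r+1`
is located to the right of `r`; the charge is the sum of the indices. -/
def chargeStdAux : ℕ → ℕ → List ℕ → ℕ
  | _, _, [] => 0
  | prev, ind, p :: rest =>
    let ind' := if prev < p then ind + 1 else ind
    ind' + chargeStdAux p ind' rest

def chargeStd : List ℕ → ℕ
  | [] => 0
  | p :: rest => chargeStdAux p 0 rest

/-- positions of a word of length `n`, read leftwards starting just left of `s`, cyclically. -/
def cycOrder (n s : ℕ) : List ℕ := (List.range s).reverse ++ (List.range' s (n - s)).reverse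

/-- first position, leftwards-cyclically from `s`, carrying the letter `l`. -/
def findCyc (w : List ℕ) (l s : ℕ) : Option ℕ :=
  (cycOrder w.length s).find? fun i => w.getD i 0 = l

def extractAux (w : List ℕ) : ℕ → ℕ → ℕ → List ℕ
  | 0, _, _ => []
  | fuel + 1, s, l =>
    match findCyc w l s with
    | none => []
    | some p => p :: extractAux w fuel p (l + 1)

/-- positions of the extracted standard subword: the rightmost `1`, then cyclically
leftwards the first `2`, then the first `3`, etc. -/
def extract (w : List ℕ) : List ℕ :=
  if 1 ∈ w then
    (w.length - 1 - (w.reverse.findIdx (· = 1))) ::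
      extractAux w (w.foldr max 0) (w.length - 1 - (w.reverse.findIdx (· = 1))) 2
  else []

def removeIdx (w : List ℕ) (I : List ℕ) : List ℕ :=
  ((w.zipIdx).filter fun p => p.2 ∉ I).map Prod.fst

def chargeAux : ℕ → List ℕ → ℕ
  | 0, _ => 0
  | fuel + 1, w =>
    if (extract w).isEmpty then 0
    else chargeStd (extract w) + chargeAux fuel (removeIdx w (extract w))

/-- The Lascoux–Schützenberger charge of a word (of partition weight): the sum of the
charges of the successively extracted standard subwords. -/
def charge (w : List ℕ) : ℕ := chargeAux w.length w

/-- The reading word of a tableau: rows read left to right, starting from the bottom row. -/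
def readingWord {sh : List ℕ} (T : SSYT sh) : List ℕ :=
  ((List.range sh.length).reverse.map fun i =>
    (List.range (sh.getD i 0)).map fun j => T.entry i j).flatten

/-- The Kostka–Foulkes polynomial `K_{ηλ}(t) = Σ_T t^{c(T)}`, summed over all SSYT
of shape `η` and weight `λ`, where `c` is the Lascoux–Schützenberger charge. -/
noncomputable def kostkaFoulkes (eta lam : List ℕ) : Polynomial ℤ :=
  ∑ᶠ T : {T : SSYT eta // WtIs eta T.entry lam}, Polynomial.X ^ charge (readingWord T.1)

/-- `𝒫_{λμ}(t) = Σ_η K_{ημ} K_{ηλ}(t)`, summed over all partitions `η` of `|λ|`. -/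
noncomputable def Pcal (lam mu : List ℕ) : Polynomial ℤ :=
  ∑ eta ∈ partitionsOf lam.sum, (kostka eta mu : Polynomial ℤ) * kostkaFoulkes eta lam

/-- `ℛ_{λμ}(t) = Σ_η K_{ημ} K_{η'λ}(t)`, summed over all partitions `η` of `|λ|`. -/
noncomputable def Rcal (lam mu : List ℕ) : Polynomial ℤ :=
  ∑ eta ∈ partitionsOf lam.sum,
    (kostka eta mu : Polynomial ℤ) * kostkaFoulkes (conjList eta) lam


/-- Delsarte's polynomial `α_λ(ν;q)`: for a prime `p`, `α_λ(ν;p)` is the number of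
subgroups of type `ν` in a finite abelian `p`-group of type `λ`. -/
noncomputable def alphaPoly (lam nu : List ℕ) : Polynomial ℤ :=
  ∏ j ∈ Finset.Icc 1 (lam.headD 0),
    Polynomial.X ^ (conjC nu (j + 1) * (conjC lam j - conjC nu j)) *
      qbinom (conjC lam j - conjC nu (j + 1)) (conjC nu j - conjC nu (j + 1))


open Polynomial Finset in
lemma qbinom_eq_zero : ∀ {n k : ℕ}, n < k → qbinom n k = 0
  | 0, _ + 1, _ => rfl
  | n + 1, k + 1, h => by
      rw [qbinom, qbinom_eq_zero (by omega), qbinom_eq_zero (by omega)]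
      ring

lemma qbinom_self : ∀ n : ℕ, qbinom n n = 1
  | 0 => rfl
  | n + 1 => by rw [qbinom, qbinom_self n, qbinom_eq_zero (by omega)]; ring

open Polynomial Finset in
lemma qbinom_one : ∀ n : ℕ, qbinom n 1 = ∑ i ∈ range n, Polynomial.X ^ i
  | 0 => by simp [show qbinom 0 1 = 0 from rfl]
  | n + 1 => by
      rw [qbinom, qbinom_one n, Finset.mul_sum, Finset.sum_range_succ']
      rw [show qbinom n 0 = 1 from by cases n <;> rfl]
      simp [← pow_succ']
      ring

open Polynomial Finset in
lemma qbinom_rec2 : ∀ n k : ℕ, qbinom (n + 1) (k + 1)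
    = Polynomial.X ^ (n - k) * qbinom n k + qbinom n (k + 1)
  | 0, 0 => by simp [qbinom, show qbinom 0 0 = 1 from rfl, qbinom_eq_zero]
  | 0, k + 1 => by
      rw [qbinom_eq_zero (show (0:ℕ)+1 < k+1+1 by omega),
        qbinom_eq_zero (show (0:ℕ) < k+1+1 by omega)]
      simp [qbinom_eq_zero (show (0:ℕ) < k+1 by omega)]
  | n + 1, 0 => by
      rw [qbinom, qbinom_one (n+1), qbinom_one (n+2), Nat.sub_zero,
        Finset.sum_range_succ (fun i => (Polynomial.X : Polynomial ℤ) ^ i) (n+1)]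
      ring
  | n + 1, m + 1 => by
      rcases Nat.lt_trichotomy m n with h | rfl | h
      · obtain ⟨d, rfl⟩ : ∃ d, n = m + 1 + d := ⟨n - m - 1, by omega⟩
        have e1 := qbinom_rec2 (m + 1 + d) m
        have e1' : qbinom (m + d + 2) (m + 1)
            = qbinom (m + d + 1) m + Polynomial.X ^ (m + 1) * qbinom (m + d + 1) (m + 1) := by
          rw [show m + d + 2 = (m + d + 1) + 1 by ring, qbinom]
        have e2 := qbinom_rec2 (m + 1 + d) (m + 1)
        have e2' : qbinom (m + d + 2) (m + 2)
            = qbinom (m + d + 1) (m + 1) + Polynomial.X ^ (m + 2) * qbinom (m + d + 1) (m + 2) := by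
          rw [show m + d + 2 = (m + d + 1) + 1 by ring, qbinom]
        have hgoal : qbinom (m + d + 3) (m + 2)
            = qbinom (m + d + 2) (m + 1) + Polynomial.X ^ (m + 2) * qbinom (m + d + 2) (m + 2) := by
          rw [show m + d + 3 = (m + d + 2) + 1 by ring, qbinom]
        simp only [show m + 1 + d - m = d + 1 by omega,
          show m + 1 + d - (m + 1) = d by omega,
          show m + 1 + d + 1 + 1 = m + d + 3 by omega,
          show m + 1 + d + 1 - (m + 1) = d + 1 by omega,
          show m + 1 + d + 1 = m + d + 2 by omega,
          show m + 1 + d = m + d + 1 by omega,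
          show m + d + 1 + 1 - (m + 1) = d + 1 by omega,
          show m + d + 1 + 1 = m + d + 2 by omega,
          show m + d + 1 - m = d + 1 by omega,
          show m + d + 1 - (m + 1) = d by omega,
          show m + 1 + 1 = m + 2 by omega] at e1 e2 ⊢
        rw [hgoal]
        linear_combination e1 + Polynomial.X ^ (m+2) * e2
          - Polynomial.X ^ (d+1) * e1' - e2'
      · rw [qbinom_self (m + 2), qbinom_self (m + 1),
          qbinom_eq_zero (show m + 1 < m + 1 + 1 by omega), Nat.sub_self]
        ring
      · rw [qbinom_eq_zero (by omega), qbinom_eq_zero (by omega),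
          qbinom_eq_zero (by omega)]; ring

open Polynomial Finset in
lemma qbinom_rev : ∀ n k : ℕ,
    (Polynomial.aeval ((RatFunc.X : RatFunc ℚ)⁻¹) (qbinom n k)) * RatFunc.X ^ (k * (n - k))
      = Polynomial.aeval (RatFunc.X : RatFunc ℚ) (qbinom n k)
  | n, 0 => by simp [show qbinom n 0 = 1 from by cases n <;> rfl]
  | 0, k + 1 => by simp [qbinom_eq_zero (show 0 < k + 1 by omega)]
  | n + 1, k + 1 => by
      have hX : (RatFunc.X : RatFunc ℚ) ≠ 0 := RatFunc.X_ne_zero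
      rcases Nat.lt_trichotomy k n with h | rfl | h
      · obtain ⟨d, rfl⟩ : ∃ d, n = k + 1 + d := ⟨n - k - 1, by omega⟩
        have i1 := qbinom_rev (k + 1 + d) k
        have i2 := qbinom_rev (k + 1 + d) (k + 1)
        rw [show k + 1 + d - k = d + 1 by omega] at i1
        rw [show k + 1 + d - (k + 1) = d by omega] at i2
        rw [show k + 1 + d + 1 - (k + 1) = d + 1 by omega]
        conv_rhs => rw [qbinom_rec2 (k + 1 + d) k, show k + 1 + d - k = d + 1 by omega]
        rw [show qbinom (k + 1 + d + 1) (k + 1)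
            = qbinom (k + 1 + d) k + Polynomial.X ^ (k + 1) * qbinom (k + 1 + d) (k + 1) from by
          rw [qbinom]]
        simp only [map_add, map_mul, map_pow, Polynomial.aeval_X]
        rw [← i1, ← i2]
        have p1 : (RatFunc.X : RatFunc ℚ) ^ ((k+1) * (d+1))
            = RatFunc.X ^ (d+1) * RatFunc.X ^ (k*(d+1)) := by
          rw [← pow_add]; congr 1; ring
        have p2 : ((RatFunc.X : RatFunc ℚ)⁻¹) ^ (k+1) * RatFunc.X ^ ((k+1) * (d+1))
            = RatFunc.X ^ ((k+1)*d) := by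
          rw [show (k+1)*(d+1) = (k+1) + (k+1)*d by ring,
            pow_add RatFunc.X (k+1) ((k+1)*d), inv_pow, ← mul_assoc,
            inv_mul_cancel₀ (pow_ne_zero _ hX), one_mul]
        linear_combination (Polynomial.aeval ((RatFunc.X : RatFunc ℚ)⁻¹) (qbinom (k+1+d) k)) * p1
          + (Polynomial.aeval ((RatFunc.X : RatFunc ℚ)⁻¹) (qbinom (k+1+d) (k+1))) * p2
      · simp [qbinom_self, Nat.sub_self]
      · simp [qbinom_eq_zero (show n + 1 < k + 1 by omega)]

lemma choose_split (b c : ℕ) : (b + c).choose 2 = c.choose 2 + b.choose 2 + b * c := by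
  induction c with
  | zero => simp
  | succ c ih =>
      rw [show b + (c+1) = (b+c) + 1 by ring, Nat.choose_succ_succ, Nat.choose_succ_succ c 1, ih]
      simp [Nat.choose_one_right]
      ring

open Finset in
lemma sum_range_id_choose (n : ℕ) : ∑ i ∈ range n, i = n.choose 2 := by
  rw [Finset.sum_range_id, Nat.choose_two_right]

lemma conjC_cons (x : ℕ) (t : List ℕ) (j : ℕ) :
    conjC (x :: t) j = (if j ≤ x then 1 else 0) + conjC t j := by
  by_cases h : j ≤ x <;> simp [conjC, List.filter_cons, h] <;> omega

lemma conjC_anti (l : List ℕ) {i j : ℕ} (h : i ≤ j) : conjC l j ≤ conjC l i := by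
  induction l with
  | nil => simp [conjC]
  | cons x t ih => rw [conjC_cons, conjC_cons]; split_ifs <;> omega

lemma conjC_le_length (l : List ℕ) (j : ℕ) : conjC l j ≤ l.length :=
  List.length_filter_le _ _

lemma conjC_eq_zero (l : List ℕ) (j : ℕ) (h : ∀ x ∈ l, x < j) : conjC l j = 0 := by
  rw [conjC, List.length_eq_zero_iff]
  rw [List.filter_eq_nil_iff]
  intro a ha
  simpa using (h a ha).not_ge

lemma conjC_mono_sub (nu : List ℕ) : ∀ (lam : List ℕ),
    (∀ x ∈ nu, 0 < x) → (∀ i, nu.getD i 0 ≤ lam.getD i 0) → ∀ j, conjC nu j ≤ conjC lam j := by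
  induction nu with
  | nil => intro lam _ _ j; simp [conjC]
  | cons y t ih =>
      intro lam hpos hsub j
      cases lam with
      | nil =>
          have h0 := hsub 0
          simp at h0
          have hy := hpos y (by simp)
          omega
      | cons x s =>
          rw [conjC_cons, conjC_cons]
          have hyx : y ≤ x := by simpa using hsub 0
          have := ih s (fun z hz => hpos z (by simp [hz])) (fun i => by simpa using hsub (i+1)) j
          split_ifs <;> omega

lemma getD_le_headD (l : List ℕ) (hl : l.Pairwise (· ≥ ·)) (i : ℕ) : l.getD i 0 ≤ l.headD 0 := by
  cases l with
  | nil => simp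
  | cons x t =>
      cases i with
      | zero => simp
      | succ i =>
          simp only [List.getD_cons_succ, List.headD_cons]
          rcases lt_or_ge i t.length with h | h
          · exact (List.pairwise_cons.1 hl).1 _ (by
              rw [List.getD_eq_getElem t 0 h]; exact List.getElem_mem _)
          · rw [List.getD_eq_default t 0 h]; exact Nat.zero_le x

lemma conjC_ge_iff (l : List ℕ) (hl : l.Pairwise (· ≥ ·)) :
    ∀ i, i < l.length → ∀ j, (i + 1 ≤ conjC l j ↔ j ≤ l.getD i 0) := by
  induction l with
  | nil => intro i hi; simp at hi
  | cons x t ih =>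
      intro i hi j
      obtain ⟨hx, ht⟩ := List.pairwise_cons.1 hl
      cases i with
      | zero =>
          simp only [List.getD_cons_zero, conjC_cons]
          by_cases h : j ≤ x
          · simp [h]
          · have h0 : conjC t j = 0 :=
              conjC_eq_zero t j (fun z hz => lt_of_le_of_lt (hx z hz) (by omega))
            simp [h, h0]
      | succ i =>
          simp only [List.getD_cons_succ, conjC_cons]
          have hi' : i < t.length := by simpa using hi
          by_cases h : j ≤ x
          · rw [if_pos h]
            constructor
            · intro hh; exact (ih ht i hi' j).1 (by omega)
            · intro hh; have := (ih ht i hi' j).2 hh; omega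
          · have h0 : conjC t j = 0 :=
              conjC_eq_zero t j (fun z hz => lt_of_le_of_lt (hx z hz) (by omega))
            rw [if_neg h, h0]
            have : t.getD i 0 ≤ x := by
              rw [List.getD_eq_getElem t 0 hi']; exact hx _ (List.getElem_mem _)
            constructor
            · omega
            · intro hh; omega

open Finset in
lemma nstat_eq (lam : List ℕ) (hl : lam.Pairwise (· ≥ ·)) :
    nstat lam = ∑ j ∈ Icc 1 (lam.headD 0), (conjC lam j).choose 2 := by
  have step1 : ∀ j, (conjC lam j).choose 2
      = ∑ i ∈ range lam.length, if i + 1 ≤ conjC lam j then i else 0 := by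
    intro j
    rw [← sum_range_id_choose]
    rw [show ∑ i ∈ range (conjC lam j), i
        = ∑ i ∈ range (conjC lam j), (if i + 1 ≤ conjC lam j then i else 0) from
      Finset.sum_congr rfl fun i hi => by
        have := Finset.mem_range.1 hi; rw [if_pos (by omega)]]
    refine Finset.sum_subset (Finset.range_subset_range.2 (conjC_le_length lam j)) ?_
    intro i _ hia
    simp only [Finset.mem_range, not_lt] at hia
    rw [if_neg (by omega)]
  calc nstat lam = ∑ i ∈ range lam.length, ∑ j ∈ Icc 1 (lam.headD 0),
        (if j ≤ lam.getD i 0 then i else 0) := by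
        refine Finset.sum_congr rfl fun i hi => ?_
        have hc : lam.getD i 0 ≤ lam.headD 0 := getD_le_headD lam hl i
        rw [← Finset.sum_filter]
        rw [show (Icc 1 (lam.headD 0)).filter (fun j => j ≤ lam.getD i 0)
            = Icc 1 (lam.getD i 0) from by
          ext j; simp only [Finset.mem_filter, Finset.mem_Icc]; omega]
        rw [Finset.sum_const, Nat.card_Icc]
        simp [mul_comm]
    _ = ∑ j ∈ Icc 1 (lam.headD 0), ∑ i ∈ range lam.length,
        (if i + 1 ≤ conjC lam j then i else 0) := by
        rw [Finset.sum_comm]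
        refine Finset.sum_congr rfl fun j _ => Finset.sum_congr rfl fun i hi => ?_
        exact if_congr ((conjC_ge_iff lam hl i (Finset.mem_range.1 hi) j).symm) rfl rfl
    _ = _ := Finset.sum_congr rfl fun j _ => (step1 j).symm

open Polynomial Finset in
lemma factor_id (a b b' : ℕ) (h1 : b' ≤ b) (h2 : b ≤ a) :
    (RatFunc.X : RatFunc ℚ) ^ (a.choose 2) *
      Polynomial.aeval ((RatFunc.X : RatFunc ℚ)⁻¹)
        (Polynomial.X ^ (b' * (a - b)) * qbinom (a - b') (b - b'))
    = (RatFunc.X : RatFunc ℚ) ^ ((a - b).choose 2 + b.choose 2) *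
      Polynomial.aeval (RatFunc.X : RatFunc ℚ) (qbinom (a - b') (b - b')) := by
  have hX : (RatFunc.X : RatFunc ℚ) ≠ 0 := RatFunc.X_ne_zero
  obtain ⟨e, rfl⟩ : ∃ e, b = b' + e := ⟨b - b', by omega⟩
  obtain ⟨c, rfl⟩ : ∃ c, a = b' + e + c := ⟨a - (b' + e), by omega⟩
  simp only [show b' + e + c - (b' + e) = c by omega,
    show b' + e + c - b' = e + c by omega,
    show b' + e - b' = e by omega]
  have hrev := qbinom_rev (e + c) e
  rw [show e + c - e = c by omega] at hrev
  have hch : (b' + e + c).choose 2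
      = (c.choose 2 + (b' + e).choose 2) + (e * c + b' * c) := by
    rw [choose_split (b' + e) c, Nat.add_mul]; ring
  rw [map_mul, map_pow, Polynomial.aeval_X, hch]
  have p1 : (RatFunc.X : RatFunc ℚ) ^ ((c.choose 2 + (b' + e).choose 2) + (e * c + b' * c))
      = RatFunc.X ^ (c.choose 2 + (b' + e).choose 2) * RatFunc.X ^ (e * c) * RatFunc.X ^ (b' * c) := by
    rw [← pow_add, ← pow_add]; congr 1; omega
  have p2 : ((RatFunc.X : RatFunc ℚ)⁻¹) ^ (b' * c) * RatFunc.X ^ (b' * c) = 1 := by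
    rw [inv_pow, inv_mul_cancel₀ (pow_ne_zero _ hX)]
  rw [← hrev, p1]
  linear_combination (RatFunc.X : RatFunc ℚ) ^ (c.choose 2 + (b' + e).choose 2)
    * RatFunc.X ^ (e * c)
    * (Polynomial.aeval ((RatFunc.X : RatFunc ℚ)⁻¹) (qbinom (e + c) e)) * p2


/-- For partitions `ν ⊆ λ`, as an identity of rational functions in `q`,
`q^{n(λ)} α_λ(ν; q⁻¹) = ∏_{j≥1} q^{C(λ'_j-ν'_j,2)+C(ν'_j,2)} [λ'_j-ν'_{j+1} choose ν'_j-ν'_{j+1}]_q`. -/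
theorem stmt3 (lam nu : List ℕ)
    (hlam : lam.Pairwise (· ≥ ·)) (hlpos : ∀ x ∈ lam, 0 < x)
    (hnu : nu.Pairwise (· ≥ ·)) (hnpos : ∀ x ∈ nu, 0 < x)
    (hsub : ∀ i, nu.getD i 0 ≤ lam.getD i 0) :
    (RatFunc.X : RatFunc ℚ) ^ nstat lam *
        Polynomial.aeval ((RatFunc.X : RatFunc ℚ)⁻¹) (alphaPoly lam nu) =
      ∏ j ∈ Finset.Icc 1 (lam.headD 0),
        (RatFunc.X : RatFunc ℚ) ^
            (Nat.choose (conjC lam j - conjC nu j) 2 + Nat.choose (conjC nu j) 2) *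
          Polynomial.aeval (RatFunc.X : RatFunc ℚ)
            (qbinom (conjC lam j - conjC nu (j + 1)) (conjC nu j - conjC nu (j + 1))) := by
  rw [alphaPoly, map_prod, nstat_eq lam hlam, ← Finset.prod_pow_eq_pow_sum,
    ← Finset.prod_mul_distrib]
  refine Finset.prod_congr rfl fun j _ => ?_
  exact factor_id (conjC lam j) (conjC nu j) (conjC nu (j + 1))
    (conjC_anti nu (Nat.le_succ j)) (conjC_mono_sub nu lam hnpos hsub j)


end KHL
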